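/- Let p be a prime, n = ⌊√p⌋, and write √p = ⟨n; α, β, …⟩ for its regular continued fraction. Then h₂ = αβ + 1 ≤ 2n. -/

import Mathlib

/-- State `(m, d)` of the continued fraction algorithm for `√p` at step `i`,
representing the complete quotient `(√p + m) / d`; initial state `(0, 1)`. -/
def cfState (p : ℕ) : ℕ → ℕ × ℕ
  | 0 => (0, 1)
  | i + 1 =>
    let m := (cfState p i).1
    let d := (cfState p i).2
    let a := (Nat.sqrt p + m) / d
    (a * d - m, (p - (a * d - m) ^ 2) / d)

/-- The `i`-th partial quotient `aᵢ` of the regular continued fraction of `√p`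
(so `cfA p 0 = ⌊√p⌋`). -/
def cfA (p i : ℕ) : ℕ := (Nat.sqrt p + (cfState p i).1) / (cfState p i).2

/-- The period length `l` of the regular continued fraction of `√p`. -/
noncomputable def cfPeriod (p : ℕ) : ℕ := sInf {l | 0 < l ∧ cfState p (l + 1) = cfState p 1}

/-- `cfH p (i + 1)` is the denominator `hᵢ` of the `i`-th convergent of `√p`,
with the convention `cfH p 0 = h₋₁ = 0`, `cfH p 1 = h₀ = 1`,
`hᵢ₊₁ = aᵢ₊₁ hᵢ + hᵢ₋₁`. -/
def cfH (p : ℕ) : ℕ → ℕ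
  | 0 => 0
  | 1 => 1
  | i + 2 => cfA p (i + 1) * cfH p (i + 1) + cfH p i

theorem stmt13 (p : ℕ) (hp : p.Prime) (hl : 3 ≤ cfPeriod p) :
    cfH p 3 = cfA p 1 * cfA p 2 + 1 ∧ cfA p 1 * cfA p 2 + 1 ≤ 2 * Nat.sqrt p := by
  have hp2 := hp.two_le
  set n := Nat.sqrt p with hn
  have hn2 : n * n ≤ p := by simpa [pow_two] using Nat.sqrt_le' p
  have hlt : p < (n + 1) * (n + 1) := by simpa [pow_two] using Nat.lt_succ_sqrt' p
  have hne : n * n ≠ p := by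
    intro h
    have hdvd : n ∣ p := ⟨n, h.symm⟩
    rcases (hp.eq_one_or_self_of_dvd n hdvd) with h1 | h1 <;> nlinarith
  have hn1 : 1 ≤ n := by nlinarith
  set t := p - n * n with ht
  have ht1 : 1 ≤ t := by omega
  have hpt : p = n * n + t := by omega
  have ht2 : t ≤ 2 * n := by nlinarith
  have hs1 : cfState p 1 = (n, t) := by
    show ((Nat.sqrt p + 0) / 1 * 1 - 0, (p - ((Nat.sqrt p + 0) / 1 * 1 - 0) ^ 2) / 1) = (n, t)
    simp [← hn, pow_two]
    exact ht.symm
  set α := 2 * n / t with hα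
  set r := 2 * n % t with hr
  have hqr : t * α + r = 2 * n := by rw [hα, hr]; exact Nat.div_add_mod _ _
  have hrt : r < t := Nat.mod_lt _ (by omega)
  have hα1 : 1 ≤ α := (Nat.one_le_div_iff (by omega)).mpr ht2
  have hqt : t ≤ t * α := Nat.le_mul_of_pos_right t hα1
  have hrn : r ≤ n := by omega
  set u := n - r with hu
  have hun : n = u + r := by omega
  have hqu : t * α = 2 * u + r := by omega
  have hA1 : cfA p 1 = α := by
    rw [cfA, hs1, ← hn]; simp [hα, two_mul]
  have hpu : p = t * (1 + α * r) + u ^ 2 := by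
    zify at hpt hun hqu ⊢
    linear_combination hpt - r * hqu + (n + u + r) * hun
  have hs2 : cfState p 2 = (u, 1 + α * r) := by
    show (((Nat.sqrt p + (cfState p 1).1) / (cfState p 1).2) * (cfState p 1).2 - (cfState p 1).1,
      (p - (((Nat.sqrt p + (cfState p 1).1) / (cfState p 1).2) * (cfState p 1).2 - (cfState p 1).1) ^ 2) / (cfState p 1).2) = (u, 1 + α * r)
    rw [hs1, ← hn]
    have e1 : (n + n) / t = α := by rw [hα, two_mul]
    rw [e1]
    have hqu' : α * t = 2 * u + r := by rw [mul_comm]; exact hqu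
    have e2 : α * t - n = u := by omega
    rw [e2]
    have e3 : (p - u ^ 2) / t = 1 + α * r := by
      rw [hpu]
      rw [Nat.add_sub_cancel, Nat.mul_div_cancel_left _ (by omega : 0 < t)]
    rw [e3]
  have hr1 : 1 ≤ r := by
    by_contra hr0
    have hr0 : r = 0 := by omega
    have hu0 : u = n := by omega
    have hs2' : cfState p 2 = (n, 1) := by rw [hs2, hr0, hu0]; simp
    have hs3 : cfState p 3 = cfState p 1 := by
      show (((Nat.sqrt p + (cfState p 2).1) / (cfState p 2).2) * (cfState p 2).2 - (cfState p 2).1,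
        (p - (((Nat.sqrt p + (cfState p 2).1) / (cfState p 2).2) * (cfState p 2).2 - (cfState p 2).1) ^ 2) / (cfState p 2).2) = cfState p 1
      rw [hs2', hs1, ← hn]
      simp [pow_two]
      exact ht.symm
    have h2mem : 2 ∈ {l | 0 < l ∧ cfState p (l + 1) = cfState p 1} := ⟨by norm_num, hs3⟩
    have := Nat.sInf_le h2mem
    rw [cfPeriod] at hl
    omega
  have hA2 : cfA p 2 = (2 * u + r) / (1 + α * r) := by
    rw [cfA, hs2, ← hn]
    congr 1
    omega
  set β := (2 * u + r) / (1 + α * r) with hβ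
  have hβle : β * (1 + α * r) ≤ 2 * u + r := Nat.div_mul_le_self _ _
  constructor
  · show cfA p 2 * (cfA p 1 * 1 + 0) + 1 = cfA p 1 * cfA p 2 + 1
    ring
  · rw [hA1, hA2]
    rcases Nat.eq_zero_or_pos β with hβ0 | hβ0
    · rw [hβ0]; omega
    · have h1 : α * β + β ≤ α * β * r + β :=
        Nat.add_le_add_right (Nat.le_mul_of_pos_right _ hr1) β
      have h2 : α * β * r + β = β * (1 + α * r) := by ring
      have key : α * β + β ≤ 2 * u + r := le_trans h1 (h2 ▸ hβle)
      omega
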